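/- Let Q be an odd square-zero operator acting as a graded derivation on products of homogeneous operator-valued functions, and let b₋₁ be odd with [Q, b₋₁] = L₋₁ where [L₋₁, A(t)] = A′(t). Define m_ε(A,B)(t) = ∫_{−ε}^{0} [b₋₁, A(t′+t+ε)B(t′+t)] dt′. Then A(t+ε)B(t) − A(t)B(t−ε) = Q m_ε(A,B)(t) + m_ε(QA,B)(t) + (−1)^{|A|} m_ε(A,QB)(t). -/

import Mathlib

open intervalIntegral

/-- The Lian–Zuckerman type homotopy
`m_ε(A,B)(t) = ∫_{-ε}^{0} [b, A(t'+t+ε) B(t'+t)] dt'`, where `[b, ·]` is the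
graded commutator with the odd element `b` and `p` is the parity of `A·B`. -/
noncomputable def mop {R : Type*} [NormedRing R] [NormedAlgebra ℝ R]
    (b : R) (p : ℕ) (A B : ℝ → R) (ε t : ℝ) : R :=
  ∫ u in (-ε)..0,
    (b * (A (u + t + ε) * B (u + t))
      - (-1 : R) ^ p * ((A (u + t + ε) * B (u + t)) * b))

lemma key {R : Type*} [Ring R] (Q b a c : R) (pA pB : ℕ) :
    (Q * (b * (a * c) - (-1:R)^(pA+pB) * ((a * c) * b))
      - (-1:R)^(pA+pB+1) * ((b * (a * c) - (-1:R)^(pA+pB) * ((a * c) * b)) * Q))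
    + (b * ((Q * a - (-1:R)^pA * (a * Q)) * c)
      - (-1:R)^(pA+1+pB) * (((Q * a - (-1:R)^pA * (a * Q)) * c) * b))
    + (-1:R)^pA * (b * (a * (Q * c - (-1:R)^pB * (c * Q)))
      - (-1:R)^(pA+(pB+1)) * ((a * (Q * c - (-1:R)^pB * (c * Q))) * b))
    = ((Q*b+b*Q) * a - a * (Q*b+b*Q)) * c + a * ((Q*b+b*Q) * c - c * (Q*b+b*Q)) := by
  rcases Nat.even_or_odd pA with h1 | h1 <;> rcases Nat.even_or_odd pB with h2 | h2 <;>
    simp only [pow_add, pow_succ, pow_one, h1.neg_one_pow, h2.neg_one_pow] <;> noncomm_ring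

/-- regularized homotopy commutativity.  With `Q` odd,
`Q² = 0`, `[Q, b₋₁] = L₋₁` generating translations (`[L₋₁, A(t)] = A′(t)`),
one has
`A(t+ε)B(t) - A(t)B(t-ε) = Q m_ε(A,B)(t) + m_ε(QA,B)(t) + (-1)^{|A|} m_ε(A,QB)(t)`,
where `Q X` denotes the graded commutator `[Q, X]`. -/
theorem stmt10 (R : Type*) [NormedRing R] [NormedAlgebra ℝ R] [CompleteSpace R]
    (Q b L : R) (pA pB : ℕ) (A B A' B' : ℝ → R)
    (hA : ∀ s, HasDerivAt A (A' s) s) (hB : ∀ s, HasDerivAt B (B' s) s)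
    (hA' : Continuous A') (hB' : Continuous B')
    (hQ2 : Q * Q = 0) (hb2 : b * b = 0) (hQb : Q * b + b * Q = L)
    (hLA : ∀ s, L * A s - A s * L = A' s)
    (hLB : ∀ s, L * B s - B s * L = B' s)
    (ε t : ℝ) (hε : 0 < ε) :
    A (t + ε) * B t - A t * B (t - ε)
      = (Q * mop b (pA + pB) A B ε t
          - (-1 : R) ^ (pA + pB + 1) * (mop b (pA + pB) A B ε t * Q))
        + mop b (pA + 1 + pB)
            (fun s => Q * A s - (-1 : R) ^ pA * (A s * Q)) B ε t
        + (-1 : R) ^ pA *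
            mop b (pA + (pB + 1)) A
              (fun s => Q * B s - (-1 : R) ^ pB * (B s * Q)) ε t := by
  have hAc : Continuous A := continuous_iff_continuousAt.mpr fun s => (hA s).continuousAt
  have hBc : Continuous B := continuous_iff_continuousAt.mpr fun s => (hB s).continuousAt
  set f0 : ℝ → R := fun u =>
    b * (A (u + t + ε) * B (u + t)) - (-1:R)^(pA+pB) * ((A (u + t + ε) * B (u + t)) * b)
    with hf0def
  set f1 : ℝ → R := fun u =>
    b * ((Q * A (u + t + ε) - (-1:R)^pA * (A (u + t + ε) * Q)) * B (u + t))
      - (-1:R)^(pA+1+pB) * (((Q * A (u + t + ε) - (-1:R)^pA * (A (u + t + ε) * Q)) * B (u + t)) * b)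
    with hf1def
  set f2 : ℝ → R := fun u =>
    b * (A (u + t + ε) * (Q * B (u + t) - (-1:R)^pB * (B (u + t) * Q)))
      - (-1:R)^(pA+(pB+1)) * ((A (u + t + ε) * (Q * B (u + t) - (-1:R)^pB * (B (u + t) * Q))) * b)
    with hf2def
  have hcf0 : Continuous f0 := by fun_prop
  have hcf1 : Continuous f1 := by fun_prop
  have hcf2 : Continuous f2 := by fun_prop
  have i0 : IntervalIntegrable f0 MeasureTheory.volume (-ε) 0 := hcf0.intervalIntegrable _ _
  have i1 : IntervalIntegrable f1 MeasureTheory.volume (-ε) 0 := hcf1.intervalIntegrable _ _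
  have i2 : IntervalIntegrable f2 MeasureTheory.volume (-ε) 0 := hcf2.intervalIntegrable _ _
  have m0 : mop b (pA+pB) A B ε t = ∫ u in (-ε)..0, f0 u := rfl
  have m1 : mop b (pA+1+pB) (fun s => Q * A s - (-1:R)^pA * (A s * Q)) B ε t
      = ∫ u in (-ε)..0, f1 u := rfl
  have m2 : mop b (pA+(pB+1)) A (fun s => Q * B s - (-1:R)^pB * (B s * Q)) ε t
      = ∫ u in (-ε)..0, f2 u := rfl
  -- pull constants through the integrals
  have eQ : Q * ∫ u in (-ε)..0, f0 u = ∫ u in (-ε)..0, Q * f0 u := by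
    simpa using (ContinuousLinearMap.intervalIntegral_comp_comm (ContinuousLinearMap.mul ℝ R Q) i0).symm
  have eQ' : (-1:R)^(pA+pB+1) * ((∫ u in (-ε)..0, f0 u) * Q)
      = ∫ u in (-ε)..0, (-1:R)^(pA+pB+1) * (f0 u * Q) := by
    have h1 := ContinuousLinearMap.intervalIntegral_comp_comm
      ((ContinuousLinearMap.mul ℝ R).flip Q) i0
    have h2 := ContinuousLinearMap.intervalIntegral_comp_comm
      (ContinuousLinearMap.mul ℝ R ((-1:R)^(pA+pB+1))) (i0.mul_const Q)
    simp only [ContinuousLinearMap.mul_apply', ContinuousLinearMap.flip_apply] at h1 h2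
    rw [← h1, ← h2]
  have ePA : (-1:R)^pA * ∫ u in (-ε)..0, f2 u = ∫ u in (-ε)..0, (-1:R)^pA * f2 u := by
    simpa using (ContinuousLinearMap.intervalIntegral_comp_comm
      (ContinuousLinearMap.mul ℝ R ((-1:R)^pA)) i2).symm
  -- combine everything into a single integral
  have hQf0 : IntervalIntegrable (fun u => Q * f0 u) MeasureTheory.volume (-ε) 0 :=
    (continuous_const.mul hcf0).intervalIntegrable _ _
  have hf0Q : IntervalIntegrable (fun u => (-1:R)^(pA+pB+1) * (f0 u * Q))
      MeasureTheory.volume (-ε) 0 :=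
    (continuous_const.mul (hcf0.mul continuous_const)).intervalIntegrable _ _
  have hpf2 : IntervalIntegrable (fun u => (-1:R)^pA * f2 u) MeasureTheory.volume (-ε) 0 :=
    (continuous_const.mul hcf2).intervalIntegrable _ _
  have comb :
      ((∫ u in (-ε)..0, Q * f0 u) - (∫ u in (-ε)..0, (-1:R)^(pA+pB+1) * (f0 u * Q)))
        + (∫ u in (-ε)..0, f1 u) + (∫ u in (-ε)..0, (-1:R)^pA * f2 u)
      = ∫ u in (-ε)..0,
          ((Q * f0 u - (-1:R)^(pA+pB+1) * (f0 u * Q)) + f1 u + (-1:R)^pA * f2 u) := by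
    rw [← integral_sub hQf0 hf0Q, ← integral_add (hQf0.sub hf0Q) i1,
      ← integral_add ((hQf0.sub hf0Q).add i1) hpf2]
  -- the integrand is the derivative of u ↦ A(u+t+ε) B(u+t)
  have deriv : ∀ u : ℝ,
      HasDerivAt (fun u => A (u + t + ε) * B (u + t))
        (A' (u + t + ε) * B (u + t) + A (u + t + ε) * B' (u + t)) u := by
    intro u
    have hi1 : HasDerivAt (fun x : ℝ => x + t + ε) 1 u := by
      simpa using ((hasDerivAt_id u).add_const t).add_const ε
    have hi2 : HasDerivAt (fun x : ℝ => x + t) 1 u := by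
      simpa using (hasDerivAt_id u).add_const t
    have h1 : HasDerivAt (fun u : ℝ => A (u + t + ε)) (A' (u + t + ε)) u := by
      simpa [Function.comp_def] using (hA (u + t + ε)).scomp u hi1
    have h2 : HasDerivAt (fun u : ℝ => B (u + t)) (B' (u + t)) u := by
      simpa [Function.comp_def] using (hB (u + t)).scomp u hi2
    exact h1.mul h2
  have congr1 : (∫ u in (-ε)..0,
      ((Q * f0 u - (-1:R)^(pA+pB+1) * (f0 u * Q)) + f1 u + (-1:R)^pA * f2 u))
      = ∫ u in (-ε)..0, (A' (u + t + ε) * B (u + t) + A (u + t + ε) * B' (u + t)) := by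
    apply integral_congr
    intro u _
    simp only [hf0def, hf1def, hf2def]
    rw [key Q b (A (u + t + ε)) (B (u + t)) pA pB, hQb, hLA, hLB]
  have ftc : (∫ u in (-ε)..0, (A' (u + t + ε) * B (u + t) + A (u + t + ε) * B' (u + t)))
      = A (t + ε) * B t - A t * B (t - ε) := by
    have hcont : Continuous
        (fun u : ℝ => A' (u + t + ε) * B (u + t) + A (u + t + ε) * B' (u + t)) := by fun_prop
    have := integral_eq_sub_of_hasDerivAt (a := -ε) (b := 0) (f := fun u => A (u + t + ε) * B (u + t))
      (fun u _ => deriv u) (hcont.intervalIntegrable _ _)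
    rw [this]
    have e1 : (0:ℝ) + t + ε = t + ε := by ring
    have e2 : (0:ℝ) + t = t := by ring
    have e3 : -ε + t + ε = t := by ring
    have e4 : -ε + t = t - ε := by ring
    have e5 : t - ε + ε = t := by ring
    simp only [e1, e2, e3, e4, e5]
  rw [m0, m1, m2, eQ, eQ', ePA, comb, congr1, ftc]
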